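/- Let N ≥ 1, k ≥ 1, λ ∈ ℤ^N with λ₁ ≥ ⋯ ≥ λ_N, and let f : ℂ × ℂ → ℂ. Let x₁, …, x_{N+k−1} ∈ ℂ be pairwise distinct and nonzero, and y₁, …, y_k ∈ ℂ be pairwise distinct with y_k ≠ 0 and y_k ∉ {x₁, …, x_{N+k−1}}. Assume: (i) (x − y_k)·f(x, y_k) → 1 as x → y_k with x ≠ y_k; (ii) for each 1 ≤ j ≤ k−1, the function x ↦ f(x, y_j) is continuous at y_k. Then, in the punctured limit x_{N+k} → y_k (x_{N+k} ≠ y_k), the function s_{λ,f}(x₁, …, x_{N+k−1}, x_{N+k} / y₁, …, y_k) converges to s_{λ,f}(x₁, …, x_{N+k−1} / y₁, …, y_{k−1}), where for k = 1 the limit is interpreted as the rational Schur function s_λ(x₁, …, x_N). -/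

import Mathlib

open Complex Finset Filter Topology

noncomputable section

/-- Vandermonde product `Δ(w) = ∏_{i<j} (w i - w j)`. -/
def vprod {m : ℕ} (w : Fin m → ℂ) : ℂ :=
  ∏ i : Fin m, ∏ j : Fin m, if i < j then w i - w j else 1

/-- `D(x;y) = ∏_{i,j} (x i + y j)`. -/
def dprod {m n : ℕ} (x : Fin m → ℂ) (y : Fin n → ℂ) : ℂ :=
  ∏ i : Fin m, ∏ j : Fin n, (x i + y j)

/-- The lift `s_{λ,f}(x/y) = (-1)^{Nk} · D(x;-y)/(Δ(x)Δ(-y)) · det(F(x,y) | M_λ(x))`,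
where `F(x,y)` has entries `f(x_i, y_j)` and `M_λ(x)` has entries `x_i^{λ_j + N - j}`
(0-indexed exponent `λ_j + N - 1 - j`, integer powers).
For `k = 0` this is the rational Schur function `s_λ(x)`. -/
def schurLiftF (N k : ℕ) (lam : Fin N → ℤ) (f : ℂ → ℂ → ℂ)
    (x : Fin (N + k) → ℂ) (y : Fin k → ℂ) : ℂ :=
  (-1 : ℂ) ^ (N * k) * dprod x (fun j => -y j) /
      (vprod x * vprod fun j => -y j) *
    (Matrix.of fun i j : Fin (N + k) =>
      if h : (j : ℕ) < k then f (x i) (y ⟨j, h⟩)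
      else x i ^ (lam ⟨(j : ℕ) - k, by have := j.isLt; omega⟩ +
        (N : ℤ) - 1 - (((j : ℕ) - k : ℕ) : ℤ))).det

lemma vprod_succ {m : ℕ} (w : Fin (m+1) → ℂ) :
    vprod w = vprod (Fin.init w) * ∏ i : Fin m, (w i.castSucc - w (Fin.last m)) := by
  unfold vprod
  rw [Fin.prod_univ_castSucc]
  have hlast : (∏ j : Fin (m+1), if Fin.last m < j then w (Fin.last m) - w j else 1) = 1 := by
    apply Finset.prod_eq_one
    intro j _
    rw [if_neg (not_lt.mpr (Fin.le_last j))]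
  rw [hlast, mul_one, ← Finset.prod_mul_distrib]
  apply Finset.prod_congr rfl
  intro i _
  rw [Fin.prod_univ_castSucc, if_pos (Fin.castSucc_lt_last i)]
  congr 1

lemma vprod_snoc {m : ℕ} (x : Fin m → ℂ) (z : ℂ) :
    vprod (Fin.snoc x z) = vprod x * ∏ i : Fin m, (x i - z) := by
  rw [vprod_succ]
  simp [Fin.init_snoc, Fin.snoc_castSucc, Fin.snoc_last]

lemma dprod_succ_right {m n : ℕ} (x : Fin m → ℂ) (y : Fin (n+1) → ℂ) :
    dprod x y = dprod x (Fin.init y) * ∏ i : Fin m, (x i + y (Fin.last n)) := by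
  unfold dprod
  rw [← Finset.prod_mul_distrib]
  apply Finset.prod_congr rfl
  intro i _
  rw [Fin.prod_univ_castSucc]
  rfl

lemma dprod_snoc_left {m n : ℕ} (x : Fin m → ℂ) (z : ℂ) (y : Fin n → ℂ) :
    dprod (Fin.snoc x z) y = dprod x y * ∏ j : Fin n, (z + y j) := by
  unfold dprod
  rw [Fin.prod_univ_castSucc]
  simp [Fin.snoc_castSucc, Fin.snoc_last]

lemma vprod_ne_zero {m : ℕ} {w : Fin m → ℂ} (h : Function.Injective w) : vprod w ≠ 0 := by
  unfold vprod
  rw [Finset.prod_ne_zero_iff]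
  intro i _
  rw [Finset.prod_ne_zero_iff]
  intro j _
  split
  · exact sub_ne_zero.mpr (h.ne (ne_of_lt ‹i < j›))
  · exact one_ne_zero

/-- Cancellation property for the lifts `s_{λ,f}`: if
`(x - y_k)·f(x, y_k) → 1` as `x → y_k` and `x ↦ f(x, y_j)` is continuous at `y_k` for
`j < k`, then in the punctured limit `x_{N+k} → y_k` the quantity
`s_{λ,f}(x₁, …, x_{N+k-1}, x_{N+k} / y₁, …, y_k)` converges to
`s_{λ,f}(x₁, …, x_{N+k-1} / y₁, …, y_{k-1})` (which, for `k = 1`, is the rational Schur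
function `s_λ(x₁, …, x_N)`).  Here the number of dual variables is `k + 1 ≥ 1`. -/
theorem statement2 (N k : ℕ) (hN : 1 ≤ N) (lam : Fin N → ℤ) (hlam : Antitone lam)
    (f : ℂ → ℂ → ℂ) (x : Fin (N + k) → ℂ) (y : Fin (k + 1) → ℂ)
    (hxinj : Function.Injective x) (hx0 : ∀ i, x i ≠ 0)
    (hyinj : Function.Injective y) (hyk0 : y (Fin.last k) ≠ 0)
    (hyx : ∀ i, y (Fin.last k) ≠ x i)
    (hf1 : Tendsto (fun z : ℂ => (z - y (Fin.last k)) * f z (y (Fin.last k)))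
      (𝓝[≠] (y (Fin.last k))) (𝓝 1))
    (hf2 : ∀ j : Fin k, ContinuousAt (fun z : ℂ => f z (y j.castSucc)) (y (Fin.last k))) :
    Tendsto (fun z : ℂ => schurLiftF N (k + 1) lam f (Fin.snoc x z) y)
      (𝓝[≠] (y (Fin.last k))) (𝓝 (schurLiftF N k lam f x (Fin.init y))) := by
  set yk := y (Fin.last k) with hyk
  -- the big matrix, as a function of the extra variable z
  set A : ℂ → Matrix (Fin (N+k+1)) (Fin (N+k+1)) ℂ := fun z =>
    Matrix.of fun i j => if h : (j : ℕ) < k+1 then f ((Fin.snoc x z : Fin (N+k+1) → ℂ) i) (y ⟨j, h⟩)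
      else (Fin.snoc x z : Fin (N+k+1) → ℂ) i ^ (lam ⟨(j : ℕ) - (k+1), by have := j.isLt; omega⟩ +
        (N : ℤ) - 1 - (((j : ℕ) - (k+1) : ℕ) : ℤ)) with hA
  have h0 : ∀ z : ℂ, schurLiftF N (k+1) lam f (Fin.snoc x z) y =
      (-1 : ℂ) ^ (N * (k+1)) * dprod (Fin.snoc x z) (fun j => -y j) /
        (vprod (Fin.snoc x z) * vprod fun j => -y j) * (A z).det := fun z => rfl
  -- big matrix with the last row rescaled by (z - yk)
  set B : ℂ → Matrix (Fin (N+k+1)) (Fin (N+k+1)) ℂ := fun z =>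
    (A z).updateRow (Fin.last (N+k)) ((z - yk) • A z (Fin.last (N+k))) with hB
  have hdetB : ∀ z : ℂ, (B z).det = (z - yk) * (A z).det := by
    intro z
    rw [hB, Matrix.det_updateRow_smul, Matrix.updateRow_eq_self]
  -- reduced prefactor
  set P : ℂ → ℂ := fun z =>
    (-1 : ℂ) ^ (N * (k+1)) *
      (dprod x (fun j : Fin (k+1) => -y j) * ∏ j : Fin k, (z - y j.castSucc)) /
      ((vprod x * ∏ i, (x i - z)) * vprod fun j : Fin (k+1) => -y j) with hP
  have h1 : ∀ z : ℂ, schurLiftF N (k+1) lam f (Fin.snoc x z) y = P z * (B z).det := by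
    intro z
    rw [h0 z, hdetB z, dprod_snoc_left, vprod_snoc, hP]
    rw [show (∏ j : Fin (k+1), (z + -y j)) =
      (∏ j : Fin k, (z - y j.castSucc)) * (z - yk) by
        rw [Fin.prod_univ_castSucc]; simp [sub_eq_add_neg]; exact Or.inl rfl]
    ring
  -- the limit matrix: last row is the unit vector at column k
  set Blim : Matrix (Fin (N+k+1)) (Fin (N+k+1)) ℂ := Matrix.of fun i j =>
    if i = Fin.last (N+k) then (if (j : ℕ) = k then 1 else 0) else A 0 i j with hBlim
  have hsub0 : Tendsto (fun z : ℂ => z - yk) (𝓝[≠] yk) (𝓝 0) := by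
    have h : Tendsto (fun z : ℂ => z - yk) (𝓝 yk) (𝓝 0) := by
      have := (tendsto_id (x := 𝓝 yk)).sub (tendsto_const_nhds (x := yk))
      rwa [sub_self] at this
    exact h.mono_left nhdsWithin_le_nhds
  have hBt : Tendsto B (𝓝[≠] yk) (𝓝 Blim) := by
    apply tendsto_pi_nhds.mpr
    intro i
    apply tendsto_pi_nhds.mpr
    intro j
    by_cases hi : i = Fin.last (N+k)
    · subst hi
      have hrow : ∀ z : ℂ, B z (Fin.last (N+k)) j = (z - yk) * A z (Fin.last (N+k)) j := by
        intro z
        simp [hB, Matrix.updateRow_self, smul_eq_mul]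
      have hAlast : ∀ z : ℂ, A z (Fin.last (N+k)) j =
          (if h : (j : ℕ) < k+1 then f z (y ⟨j, h⟩)
          else z ^ (lam ⟨(j : ℕ) - (k+1), by have := j.isLt; omega⟩ +
            (N : ℤ) - 1 - (((j : ℕ) - (k+1) : ℕ) : ℤ))) := by
        intro z
        simp only [hA, Matrix.of_apply, Fin.snoc_last]
      have hBlimlast : Blim (Fin.last (N+k)) j = if (j : ℕ) = k then 1 else 0 := by
        simp [hBlim]
      simp only [hrow, hAlast]
      rw [hBlimlast]
      rcases lt_trichotomy ((j : ℕ)) k with hj | hj | hj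
      · simp only [dif_pos (show (j : ℕ) < k+1 by omega)]
        rw [if_neg hj.ne]
        have h2 := ((hf2 ⟨(j : ℕ), hj⟩).tendsto).mono_left
          (nhdsWithin_le_nhds : 𝓝[≠] yk ≤ 𝓝 yk)
        simpa using hsub0.mul h2
      · simp only [dif_pos (show (j : ℕ) < k+1 by omega)]
        rw [if_pos hj]
        have hjj : (⟨(j : ℕ), show (j : ℕ) < k+1 by omega⟩ : Fin (k+1)) = Fin.last k :=
          Fin.ext (by simp [hj])
        simp only [hjj, ← hyk]
        exact hf1
      · have hj1 : ¬ (j : ℕ) < k+1 := by omega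
        simp only [dif_neg hj1]
        rw [if_neg (by omega)]
        have hz := ((continuousAt_zpow₀ yk
            (lam ⟨(j : ℕ) - (k+1), by have := j.isLt; omega⟩ +
              (N : ℤ) - 1 - (((j : ℕ) - (k+1) : ℕ) : ℤ)) (Or.inl hyk0)).tendsto).mono_left
          (nhdsWithin_le_nhds : 𝓝[≠] yk ≤ 𝓝 yk)
        simpa using hsub0.mul hz
    · obtain ⟨i', rfl⟩ := Fin.exists_castSucc_eq.mpr hi
      have hconst : ∀ z : ℂ, B z (Fin.castSucc i') j = Blim (Fin.castSucc i') j := by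
        intro z
        simp only [hB, Matrix.updateRow_ne hi, hBlim, Matrix.of_apply, if_neg hi]
        simp only [hA, Matrix.of_apply, Fin.snoc_castSucc]
      simp only [hconst]
      exact tendsto_const_nhds
  have hdet : Tendsto (fun z => (B z).det) (𝓝[≠] yk) (𝓝 Blim.det) := by
    exact ((continuous_id.matrix_det).tendsto Blim).comp hBt
  have hp1 : (∏ i, (x i - yk)) ≠ 0 := by
    rw [Finset.prod_ne_zero_iff]
    intro i _
    exact sub_ne_zero.mpr fun e => hyx i e.symm
  have hnegy : Function.Injective (fun j : Fin (k+1) => -y j) := by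
    intro a b hab
    exact hyinj (neg_injective hab)
  have hnegy' : Function.Injective (fun j : Fin k => -(Fin.init y) j) := by
    intro a b hab
    have := hyinj (neg_injective hab)
    exact Fin.castSucc_injective k this
  have hp2 : (∏ j : Fin k, (yk - y j.castSucc)) ≠ 0 := by
    rw [Finset.prod_ne_zero_iff]
    intro j _
    refine sub_ne_zero.mpr fun e => ?_
    have := hyinj e
    exact absurd this (Fin.ne_of_gt (Fin.castSucc_lt_last j))
  have hPt : Tendsto P (𝓝[≠] yk) (𝓝 (P yk)) := by
    have hc : ContinuousAt P yk := by
      apply ContinuousAt.div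
      · exact (continuous_const.mul (continuous_const.mul
          (continuous_finset_prod _ fun j _ => continuous_id.sub continuous_const))).continuousAt
      · exact ((continuous_const.mul (continuous_finset_prod _ fun i _ =>
          continuous_const.sub continuous_id)).mul continuous_const).continuousAt
      · exact mul_ne_zero (mul_ne_zero (vprod_ne_zero hxinj) hp1) (vprod_ne_zero hnegy)
    exact hc.tendsto.mono_left nhdsWithin_le_nhds
  -- identify the limit
  have entry_eq : ∀ (w : ℂ) (v v' : ℕ) (hv : v < N) (hv' : v' < N), v = v' →
      w ^ (lam ⟨v, hv⟩ + (N : ℤ) - 1 - (v : ℤ)) = w ^ (lam ⟨v', hv'⟩ + (N : ℤ) - 1 - (v' : ℤ)) := by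
    intro w v v' hv hv' h
    subst h
    rfl
  set Ms : Matrix (Fin (N+k)) (Fin (N+k)) ℂ := Matrix.of fun i j =>
    if h : (j : ℕ) < k then f (x i) (Fin.init y ⟨j, h⟩)
    else x i ^ (lam ⟨(j : ℕ) - k, by have := j.isLt; omega⟩ +
      (N : ℤ) - 1 - (((j : ℕ) - k : ℕ) : ℤ)) with hMs
  have hsmall : schurLiftF N k lam f x (Fin.init y) =
      (-1 : ℂ) ^ (N * k) * dprod x (fun j => -(Fin.init y) j) /
        (vprod x * vprod fun j => -(Fin.init y) j) * Ms.det := rfl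
  have hk1 : k < N+k+1 := by omega
  have hsub : Blim.submatrix (Fin.last (N+k)).succAbove
      ((⟨k, hk1⟩ : Fin (N+k+1)).succAbove) = Ms := by
    funext i j
    simp only [Matrix.submatrix_apply, Fin.succAbove_last]
    have hne : Fin.castSucc i ≠ Fin.last (N+k) := Fin.ne_of_lt (Fin.castSucc_lt_last i)
    rw [hBlim]
    simp only [Matrix.of_apply, if_neg hne]
    rw [hA]
    simp only [Matrix.of_apply, Fin.snoc_castSucc]
    rw [hMs]
    simp only [Matrix.of_apply]
    by_cases hj : (j : ℕ) < k
    · rw [Fin.succAbove_of_castSucc_lt _ _ (by rw [Fin.lt_def]; exact hj)]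
      have h1 : ((Fin.castSucc j : Fin (N+k+1)) : ℕ) < k+1 := by
        simp only [Fin.coe_castSucc]; omega
      rw [dif_pos h1, dif_pos hj]
      congr 1
    · rw [Fin.succAbove_of_le_castSucc _ _ (by rw [Fin.le_def]; simpa using not_lt.mp hj)]
      have h1 : ¬ ((Fin.succ j : Fin (N+k+1)) : ℕ) < k+1 := by
        simp only [Fin.val_succ]; omega
      rw [dif_neg h1, dif_neg hj]
      exact entry_eq (x i) _ _ _ _ (by simp only [Fin.val_succ]; omega)
  have hdetBlim : Blim.det = (-1 : ℂ) ^ (N+k+k) * Ms.det := by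
    rw [Matrix.det_succ_row Blim (Fin.last (N+k)),
      Finset.sum_eq_single (⟨k, hk1⟩ : Fin (N+k+1))]
    · rw [hsub]
      have h1 : Blim (Fin.last (N+k)) ⟨k, hk1⟩ = 1 := by simp [hBlim]
      rw [h1, mul_one]
      congr 2
    · intro b _ hbne
      have : (b : ℕ) ≠ k := fun e => hbne (Fin.ext e)
      have h0 : Blim (Fin.last (N+k)) b = 0 := by simp [hBlim, this]
      rw [h0, mul_zero, zero_mul]
    · intro h
      exact absurd (Finset.mem_univ _) h
  have hfinal : schurLiftF N k lam f x (Fin.init y) = P yk * Blim.det := by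
    rw [hsmall, hdetBlim, hP]
    have e1 : dprod x (fun j : Fin (k+1) => -y j)
        = dprod x (fun j : Fin k => -(Fin.init y) j) * ∏ i, (x i - yk) := by
      rw [dprod_succ_right]
      congr 1
    have e2 : vprod (fun j : Fin (k+1) => -y j)
        = vprod (fun j : Fin k => -(Fin.init y) j) * ∏ j : Fin k, (yk - y j.castSucc) := by
      rw [vprod_succ]
      congr 1
      apply Finset.prod_congr rfl
      intro jj _
      rw [← hyk]
      ring
    rw [e1, e2]
    have hs : (-1 : ℂ) ^ (N*(k+1)) * (-1 : ℂ) ^ (N+k+k) = (-1 : ℂ) ^ (N*k) := by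
      rw [← pow_add, show N*(k+1) + (N+k+k) = N*k + 2*(N+k) by ring, pow_add, pow_mul]
      norm_num
    have hV := vprod_ne_zero hxinj
    have hv0 := vprod_ne_zero hnegy'
    field_simp
    ring_nf
    rw [show ((-1:ℂ)) ^ (N*2) = 1 by rw [mul_comm, pow_mul]; norm_num,
      show ((-1:ℂ)) ^ (k*2) = 1 by rw [mul_comm, pow_mul]; norm_num]
    ring
  simp only [h1]
  rw [hfinal]
  exact hPt.mul hdet
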